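/- Let L ≥ 1 be an integer and for l = 0, …, L−1 define the evenly spaced unit directions c_l = (cos(2πl/L), sin(2πl/L)) in ℝ² with the standard inner product. Then for every z ∈ ℝ² there exists an index l with ⟨c_l, z⟩ ≥ ‖z‖·cos(π/L). -/

import Mathlib

open Real RealInnerProductSpace

/-- The `l`-th of `L` evenly spaced unit directions in the plane. -/
noncomputable def evenDir (L l : ℕ) : EuclideanSpace ℝ (Fin 2) :=
  (WithLp.equiv 2 (Fin 2 → ℝ)).symm
    ![Real.cos (2 * π * l / L), Real.sin (2 * π * l / L)]

/-- Quantitative completeness of direction sampling: among `L` evenly spaced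
directions, some direction has projection of `z` at least `‖z‖ · cos (π/L)`. -/
theorem stmt_4 (L : ℕ) (hL : 1 ≤ L) (z : EuclideanSpace ℝ (Fin 2)) :
    ∃ l < L, ‖z‖ * Real.cos (π / L) ≤ ⟪evenDir L l, z⟫ := by
  by_cases hz : z = 0
  · exact ⟨0, hL, by simp [hz]⟩
  set a : ℝ := z 0 with ha
  set b : ℝ := z 1 with hb
  set w : ℂ := Complex.mk a b with hw
  have hwre : w.re = a := rfl
  have hwim : w.im = b := rfl
  have hwne : w ≠ 0 := by
    intro h
    apply hz
    have hre : a = 0 := by rw [← hwre, h]; rfl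
    have him : b = 0 := by rw [← hwim, h]; rfl
    ext i
    fin_cases i <;> simpa [← ha, ← hb]
  have hLpos : (0:ℝ) < L := by exact_mod_cast hL
  have hLne : (L:ℝ) ≠ 0 := ne_of_gt hLpos
  have hπ : (0:ℝ) < π := Real.pi_pos
  set r : ℝ := ‖z‖ with hrdef
  have hr : r = ‖w‖ := by
    rw [hrdef, EuclideanSpace.norm_eq, Complex.norm_def, Complex.normSq_mk]
    congr 1
    rw [Fin.sum_univ_two]
    simp [← ha, ← hb, sq]
  have hrpos : 0 < r := by
    rw [hr]
    exact norm_pos_iff.mpr hwne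
  set θ : ℝ := Complex.arg w with hθ
  have hcos : a = r * Real.cos θ := by
    have habs : ‖w‖ ≠ 0 := norm_ne_zero_iff.mpr hwne
    rw [hθ, Complex.cos_arg hwne, hwre, hr, mul_comm, div_mul_cancel₀ _ habs]
  have hsin : b = r * Real.sin θ := by
    have habs : ‖w‖ ≠ 0 := norm_ne_zero_iff.mpr hwne
    rw [hθ, Complex.sin_arg, hwim, hr, mul_comm, div_mul_cancel₀ _ habs]
  set n : ℤ := round (θ * L / (2 * π)) with hn
  have hLZ : (0:ℤ) < (L:ℤ) := by exact_mod_cast hL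
  refine ⟨(n % L).toNat, ?_, ?_⟩
  · have h1 : n % L < L := Int.emod_lt_of_pos n hLZ
    have h2 : 0 ≤ n % L := Int.emod_nonneg n (ne_of_gt hLZ)
    omega
  set l : ℕ := (n % L).toNat with hl
  have hlcast : (l:ℝ) = (n:ℝ) - (L:ℝ) * ((n / L : ℤ) : ℝ) := by
    have : ((l:ℤ) : ℝ) = ((n % L : ℤ) : ℝ) := by
      norm_cast
      exact Int.toNat_of_nonneg (Int.emod_nonneg n (ne_of_gt hLZ))
    rw [show ((l:ℤ):ℝ) = (l:ℝ) from by norm_cast] at this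
    rw [this, Int.emod_def]
    push_cast
    ring
  -- the angle of direction l
  set m : ℤ := n / L with hm
  have hα : 2 * π * l / L = 2 * π * n / L - m * (2 * π) := by
    rw [hlcast]
    field_simp
  -- inner product computation
  have hinner : ⟪evenDir L l, z⟫ = r * Real.cos (2 * π * n / L - θ) := by
    simp only [evenDir, PiLp.inner_apply, RCLike.inner_apply, Fin.sum_univ_two]
    have h0 : ((WithLp.equiv 2 (Fin 2 → ℝ)).symm
        ![Real.cos (2 * π * l / L), Real.sin (2 * π * l / L)]) 0
        = Real.cos (2 * π * l / L) := rfl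
    have h1 : ((WithLp.equiv 2 (Fin 2 → ℝ)).symm
        ![Real.cos (2 * π * l / L), Real.sin (2 * π * l / L)]) 1
        = Real.sin (2 * π * l / L) := rfl
    simp only [conj_trivial]
    rw [h0, h1, ← ha, ← hb, hcos, hsin, hα]
    have hc : Real.cos (2 * π * n / L - m * (2 * π) - θ)
        = Real.cos (2 * π * n / L - θ) := by
      have key := Real.cos_add_int_mul_two_pi (2 * π * n / L - θ) (-m)
      rw [show 2 * π * (n:ℝ) / L - m * (2 * π) - θ
          = (2 * π * n / L - θ) + ((-m : ℤ):ℝ) * (2 * π) by push_cast; ring]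
      exact key
    have expand := Real.cos_sub (2 * π * (n:ℝ) / L - m * (2 * π)) θ
    rw [← hc, expand]
    ring
  rw [hinner]
  -- the angle bound
  have hround : |θ * L / (2 * π) - n| ≤ 1 / 2 := abs_sub_round _
  have hangle : |2 * π * n / L - θ| ≤ π / L := by
    have key : 2 * π * n / L - θ = (2 * π / L) * ((n:ℝ) - θ * L / (2 * π)) := by
      field_simp
    rw [key, abs_mul, abs_of_pos (by positivity : (0:ℝ) < 2 * π / L), abs_sub_comm]
    calc 2 * π / L * |θ * L / (2 * π) - (n:ℝ)| ≤ 2 * π / L * (1/2) := by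
          apply mul_le_mul_of_nonneg_left hround (by positivity)
      _ = π / L := by ring
  have hcosle : Real.cos (π / L) ≤ Real.cos (2 * π * n / L - θ) := by
    rw [← Real.cos_abs (2 * π * n / L - θ)]
    apply Real.cos_le_cos_of_nonneg_of_le_pi (abs_nonneg _)
    · exact div_le_self hπ.le (by exact_mod_cast hL)
    · exact hangle
  calc r * Real.cos (π / L) ≤ r * Real.cos (2 * π * n / L - θ) :=
        mul_le_mul_of_nonneg_left hcosle hrpos.le
    _ = r * Real.cos (2 * π * n / L - θ) := rfl
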